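/- Let 0 < α ≤ β, λ > 0, and φ : ℝ → ℝ continuous with (φ(q) − αq)(φ(q) − βq) ≤ 0 for all q. Consider ẋ = λ·φ(u − x), y = u − x with u continuously differentiable. Then there exist constants A > 0 and γ > 0 such that V(t) = A·y(t)² satisfies d/dt V(t) ≤ γ²·u̇(t)² − y(t)² for all t. -/

import Mathlib

theorem stmt_9 (α β lam : ℝ) (hα : 0 < α) (hαβ : α ≤ β) (hlam : 0 < lam)
    (φ : ℝ → ℝ) (hφ : Continuous φ)
    (hsec : ∀ q, (φ q - α * q) * (φ q - β * q) ≤ 0)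
    (u x u' : ℝ → ℝ)
    (hu : ∀ t, HasDerivAt u (u' t) t)
    (hx : ∀ t, HasDerivAt x (lam * φ (u t - x t)) t) :
    ∃ A γ : ℝ, 0 < A ∧ 0 < γ ∧ ∀ t, 0 ≤ t →
      deriv (fun s => A * (u s - x s) ^ 2) t ≤ γ ^ 2 * (u' t) ^ 2 - (u t - x t) ^ 2 := by
  have hβ : 0 < β := lt_of_lt_of_le hα hαβ
  set A : ℝ := (α + β) / (lam * (α * β)) with hA
  have hApos : 0 < A := by positivity
  have hAmul : A * (lam * (α * β)) = α + β := by
    rw [hA]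
    exact div_mul_cancel₀ _ (by positivity)
  refine ⟨A, A, hApos, hApos, fun t ht => ?_⟩
  set y : ℝ := u t - x t with hy
  have hder : HasDerivAt (fun s => A * (u s - x s) ^ 2)
      (A * ((2 : ℕ) * (u t - x t) ^ 1 * (u' t - lam * φ (u t - x t)))) t :=
    (((hu t).sub (hx t)).pow 2).const_mul A
  rw [hder.deriv]
  have hs := hsec y
  have hsq := sq_nonneg (A * u' t - y)
  have hsq2 := sq_nonneg (φ y)
  -- from sector: (α+β) * y * φ y ≥ φ y ^2 + α*β*y^2 ≥ α*β*y^2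
  have hkey : α * β * y ^ 2 ≤ (α + β) * (y * φ y) := by nlinarith
  -- multiply by 2*A*lam/(α+β): 2*y^2 ≤ 2*A*lam*(y*φ y)
  have hpos : 0 < α + β := by linarith
  have h2 : 2 * y ^ 2 ≤ 2 * A * lam * (y * φ y) := by
    have hsc := mul_le_mul_of_nonneg_left hkey (show (0:ℝ) ≤ 2 * A * lam by positivity)
    have hAe : 2 * A * lam * (α * β * y ^ 2) = 2 * (α + β) * y ^ 2 := by
      rw [show 2 * A * lam * (α * β * y ^ 2) = 2 * (A * (lam * (α * β))) * y ^ 2 by ring, hAmul]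
    rw [hAe] at hsc
    have := le_of_mul_le_mul_left (show (α+β) * (2 * y ^ 2) ≤ (α+β) * (2 * A * lam * (y * φ y)) by nlinarith [hsc]) hpos
    linarith
  rw [← hy]
  push_cast
  nlinarith [hsq, h2]
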